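/- Let x = (k,d,m) be a nonzero element of M̄_n with d ≠ 0, and let i = 2 + ⌊(m−k)/|d|⌋. Then x is nilpotent with index exactly i: the i-th power of x equals 0, while the (i−1)-st power of x is nonzero. In particular, if m = k then i = 2. -/

import Mathlib

noncomputable section

/-- Elements of the monoid: `none` is the zero element, `some (k, d, m)` a triple. -/
abbrev El := Option (ℝ × ℝ × ℝ)

/-- Membership in `M̄_n`. -/
def inM (n : ℕ) : El → Prop
  | none => True
  | some (k, d, m) => 1 - min 0 d ≤ k ∧ k ≤ m ∧ m ≤ (n : ℝ) - max 0 d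

/-- The product on `M̄_n`. -/
def mul : El → El → El
  | some (k, d, m), some (k', d', m') =>
      if max k (k' - d) ≤ min m (m' - d) then
        some (max k (k' - d), d + d', min m (m' - d))
      else none
  | _, _ => none

/-- The transpose (semigroup inverse). -/
def transp : El → El
  | none => none
  | some (k, d, m) => some (k + d, -d, m + d)

/-- The height function. -/
def height : El → ℝ
  | none => -1
  | some (k, _, m) => m - k

/-- `pw x j` is the `(j+1)`-st power of `x` (so `pw x 0 = x`). -/
def pw (x : El) : ℕ → El
  | 0 => x
  | j + 1 => mul (pw x j) x


lemma pw_pos (k d m : ℝ) (hd : 0 < d) (hkm : k ≤ m) (j : ℕ) :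
    pw (some (k, d, m)) j =
      if (j : ℝ) * d ≤ m - k then some (k, ((j : ℝ) + 1) * d, m - j * d) else none := by
  induction j with
  | zero => simp [pw]; linarith
  | succ j ih =>
    rw [pw, ih]
    by_cases h : (j : ℝ) * d ≤ m - k
    · rw [if_pos h]
      have h1 : max k (k - ((j : ℝ) + 1) * d) = k := by
        apply max_eq_left; nlinarith [hd.le]
      have h2 : min (m - (j : ℝ) * d) (m - ((j : ℝ) + 1) * d) = m - ((j : ℝ) + 1) * d := by
        apply min_eq_right; nlinarith
      simp only [mul, h1, h2]
      push_cast
      by_cases h3 : ((j : ℝ) + 1) * d ≤ m - k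
      · rw [if_pos (by linarith), if_pos h3]
        congr 2
        ring
      · rw [if_neg (by intro hc; apply h3; linarith), if_neg h3]
    · rw [if_neg h]
      have : ¬ ((j : ℝ) + 1) * d ≤ m - k := by intro hc; apply h; nlinarith
      push_cast
      rw [if_neg this]
      rfl

lemma pw_neg (k d m : ℝ) (hd : d < 0) (hkm : k ≤ m) (j : ℕ) :
    pw (some (k, d, m)) j =
      if (j : ℝ) * (-d) ≤ m - k then some (k - j * d, ((j : ℝ) + 1) * d, m) else none := by
  induction j with
  | zero => norm_num [pw, hkm]
  | succ j ih =>
    rw [pw, ih]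
    by_cases h : (j : ℝ) * (-d) ≤ m - k
    · rw [if_pos h]
      have h1 : max (k - (j : ℝ) * d) (k - ((j : ℝ) + 1) * d) = k - ((j : ℝ) + 1) * d := by
        apply max_eq_right; nlinarith
      have h2 : min m (m - ((j : ℝ) + 1) * d) = m := by
        apply min_eq_left; nlinarith
      simp only [mul, h1, h2]
      push_cast
      by_cases h3 : ((j : ℝ) + 1) * (-d) ≤ m - k
      · rw [if_pos (by nlinarith), if_pos h3]
        congr 2
        ring
      · rw [if_neg (by intro hc; apply h3; nlinarith), if_neg h3]
    · rw [if_neg h]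
      have : ¬ ((j : ℝ) + 1) * (-d) ≤ m - k := by intro hc; apply h; nlinarith
      push_cast
      rw [if_neg this]
      rfl

lemma pw_iff (k d m : ℝ) (hd : d ≠ 0) (hkm : k ≤ m) (j : ℕ) :
    pw (some (k, d, m)) j = none ↔ ¬ ((j : ℝ) * |d| ≤ m - k) := by
  rcases lt_or_gt_of_ne hd with h | h
  · rw [pw_neg k d m h hkm j, abs_of_neg h]
    split_ifs with hc <;> simp [hc] <;> first | linarith | (push_neg at hc; linarith)
  · rw [pw_pos k d m h hkm j, abs_of_pos h]
    split_ifs with hc <;> simp [hc] <;> first | linarith | (push_neg at hc; linarith)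

/-- a nonzero x = (k,d,m) ∈ M̄_n with d ≠ 0 is nilpotent of index
exactly i = 2 + ⌊(m-k)/|d|⌋: the i-th power (= `pw x (i-1)`) is 0 while the
(i-1)-st power (= `pw x (i-2)`) is nonzero; and if m = k then i = 2. -/
theorem stmt8 (n : ℕ) (hn : 2 ≤ n) (k d m : ℝ)
    (hx : inM n (some (k, d, m))) (hd : d ≠ 0)
    (i : ℕ) (hi : (i : ℤ) = 2 + ⌊(m - k) / |d|⌋) :
    pw (some (k, d, m)) (i - 1) = none ∧
    pw (some (k, d, m)) (i - 2) ≠ none ∧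
    (m = k → i = 2) := by
  have hkm : k ≤ m := hx.2.1
  have hda : (0:ℝ) < |d| := abs_pos.mpr hd
  set t : ℤ := ⌊(m - k) / |d|⌋ with ht
  have ht0 : 0 ≤ t := Int.le_floor.mpr (by push_cast; exact div_nonneg (by linarith) hda.le)
  have hi2 : i = t.toNat + 2 := by omega
  have h1 : i - 1 = t.toNat + 1 := by omega
  have h2 : i - 2 = t.toNat := by omega
  have htr : (t.toNat : ℝ) = (t : ℝ) := by
    norm_cast; omega
  have hle : (t.toNat : ℝ) * |d| ≤ m - k := by
    rw [htr]
    exact (le_div_iff₀ hda).mp (Int.floor_le _)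
  have hlt : ¬ ((t.toNat : ℝ) + 1) * |d| ≤ m - k := by
    push_cast [htr]
    intro hc
    have := Int.lt_floor_add_one ((m - k) / |d|)
    rw [div_lt_iff₀ hda] at this
    nlinarith
  refine ⟨?_, ?_, ?_⟩
  · rw [h1, pw_iff k d m hd hkm]
    push_cast
    exact hlt
  · rw [h2]
    intro hc
    exact (pw_iff k d m hd hkm _ |>.mp hc) hle
  · intro hmk
    have : t = 0 := by
      rw [ht, hmk]
      simp
    omega
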